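/- Let σ_c > 0, σ_z ≥ 0, let d, n be positive integers, and let 0 ≤ ε < σ_c. Define σ_w(ε)² = ( ε² σ_z² (d/n) + σ_z √(d/n) σ_c ε √(σ_c² − ε² + σ_z² (d/n)) ) / ( d (σ_c² − ε²) ). Then σ_c² / ( σ_c² + σ_z² (d/n) + σ_w(ε)² d ) = ( σ_c² − ε σ_c σ_z √(d/n) / √(σ_c² + σ_z² (d/n) − ε²) ) / ( σ_c² + σ_z² (d/n) ), i.e., the optimal jittering shrinkage factor α_J at jittering level σ_w(ε) equals the optimal worst-case shrinkage factor α(ε) of Theorem 1. -/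

import Mathlib

/-- Corollary 1: with the jittering level `σ_w(ε)` chosen as stated, the optimal jittering
shrinkage factor `α_J = σ_c²/(σ_c² + σ_z² (d/n) + σ_w(ε)² d)` equals the optimal worst-case
shrinkage factor `α(ε)` of Theorem 1. -/
theorem stmt16 (σc σz ε : ℝ) (d n : ℕ) (hσc : 0 < σc) (hσz : 0 ≤ σz)
    (hd : 0 < d) (hn : 0 < n) (hε0 : 0 ≤ ε) (hεc : ε < σc) :
    let σw2 : ℝ :=
      (ε ^ 2 * σz ^ 2 * ((d : ℝ) / n)
          + σz * Real.sqrt ((d : ℝ) / n) * σc * ε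
            * Real.sqrt (σc ^ 2 - ε ^ 2 + σz ^ 2 * ((d : ℝ) / n)))
        / ((d : ℝ) * (σc ^ 2 - ε ^ 2))
    σc ^ 2 / (σc ^ 2 + σz ^ 2 * ((d : ℝ) / n) + σw2 * d)
      = (σc ^ 2 - ε * σc * σz * Real.sqrt ((d : ℝ) / n)
            / Real.sqrt (σc ^ 2 + σz ^ 2 * ((d : ℝ) / n) - ε ^ 2))
          / (σc ^ 2 + σz ^ 2 * ((d : ℝ) / n)) := by
  intro σw2
  unfold σw2
  have hdn : (0:ℝ) < (d:ℝ)/n := div_pos (by exact_mod_cast hd) (by exact_mod_cast hn)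
  set D : ℝ := (d:ℝ)/n with hD
  have hεσ : 0 < σc^2 - ε^2 := by nlinarith
  have harg : σc^2 + σz^2*D - ε^2 = σc^2 - ε^2 + σz^2*D := by ring
  rw [harg]
  have hspos : 0 < σc^2 - ε^2 + σz^2*D := by nlinarith [mul_nonneg (sq_nonneg σz) hdn.le]
  set r := Real.sqrt D with hr
  have hr0 : 0 ≤ r := Real.sqrt_nonneg _
  have hr2 : r^2 = D := Real.sq_sqrt hdn.le
  set s := Real.sqrt (σc^2 - ε^2 + σz^2*D) with hs
  have hs0 : 0 < s := Real.sqrt_pos.2 hspos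
  have hs2 : s^2 = σc^2 - ε^2 + σz^2*D := Real.sq_sqrt hspos.le
  have hd0 : (0:ℝ) < (d:ℝ) := by exact_mod_cast hd
  -- denominator of LHS
  have hw0 : 0 ≤ (ε ^ 2 * σz ^ 2 * D + σz * r * σc * ε * s) / ((d:ℝ) * (σc^2 - ε^2)) := by
    apply div_nonneg
    · have := mul_nonneg (mul_nonneg (mul_nonneg (mul_nonneg hσz hr0) hσc.le) hε0) hs0.le
      nlinarith [mul_nonneg (mul_nonneg (sq_nonneg ε) (sq_nonneg σz)) hdn.le]
    · positivity
  have hden : 0 < σc^2 + σz^2*D + (ε ^ 2 * σz ^ 2 * D + σz * r * σc * ε * s) / ((d:ℝ) * (σc^2 - ε^2)) * d := by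
    have : 0 ≤ (ε ^ 2 * σz ^ 2 * D + σz * r * σc * ε * s) / ((d:ℝ) * (σc^2 - ε^2)) * d :=
      mul_nonneg hw0 hd0.le
    nlinarith [mul_nonneg (sq_nonneg σz) hdn.le]
  have hab : 0 < σc^2 + σz^2*D := by nlinarith [mul_nonneg (sq_nonneg σz) hdn.le]
  rw [div_eq_div_iff hden.ne' hab.ne']
  field_simp
  linear_combination (σc*σz^2*ε^2*s) * hr2 - (σc^2*σz*ε*r) * hs2
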